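/- Let K ≥ 2 be an integer and let α ∈ ℝ with α ≤ 1. Then the infimum of 2·D_α(p‖q)/‖p−q‖₁² over all pairs p ≠ q in relint(Δ^K) equals 2^{1−α}. In particular, D_α(p‖q) ≥ 2^{−α}·‖p−q‖₁² for all p, q ∈ relint(Δ^K), and the constant 2^{1−α} is the largest C ≥ 0 such that D_α(p‖q) ≥ (C/2)·‖p−q‖₁² holds for all p, q ∈ relint(Δ^K). -/

import Mathlib

open Finset Real

/-- The α-Tsallis entropy on the positive orthant (Shannon for α = 1, Burg for α = 0). -/
noncomputable def tsallis (α : ℝ) {K : ℕ} (p : Fin K → ℝ) : ℝ :=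
  if α = 0 then ∑ k, Real.log (p k)
  else if α = 1 then -∑ k, p k * Real.log (p k)
  else (∑ k, p k ^ α) / (α * (1 - α))

/-- The gradient of the α-Tsallis entropy on the positive orthant. -/
noncomputable def tsallisGrad (α : ℝ) {K : ℕ} (q : Fin K → ℝ) (k : Fin K) : ℝ :=
  if α = 0 then 1 / q k
  else if α = 1 then -(1 + Real.log (q k))
  else -(q k ^ (α - 1)) / (α - 1)

/-- The Bregman divergence D_α of the negative α-Tsallis entropy:
`D_α(p‖q) = -S_α(p) + S_α(q) + ⟨∇S_α(q), p - q⟩`. -/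
noncomputable def breg (α : ℝ) {K : ℕ} (p q : Fin K → ℝ) : ℝ :=
  -tsallis α p + tsallis α q + ∑ k, tsallisGrad α q k * (p k - q k)

/-- The relative interior of the probability simplex Δ^K. -/
def relintSimplex (K : ℕ) : Set (Fin K → ℝ) :=
  {p | (∀ k, 0 < p k ∧ p k < 1) ∧ ∑ k, p k = 1}

/-- The ℓ¹ norm on ℝ^K. -/
noncomputable def l1 {K : ℕ} (x : Fin K → ℝ) : ℝ := ∑ k, |x k|

/-- per-coordinate Bregman divergence -/
noncomputable def dd (α x y : ℝ) : ℝ :=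
  if α = 0 then Real.log y - Real.log x + (x - y) / y
  else if α = 1 then x * Real.log x - y * Real.log y - (1 + Real.log y) * (x - y)
  else (y ^ α - x ^ α) / (α * (1 - α)) - y ^ (α - 1) / (α - 1) * (x - y)

lemma breg_eq_sum (α : ℝ) {K : ℕ} (p q : Fin K → ℝ) :
    breg α p q = ∑ k, dd α (p k) (q k) := by
  unfold breg tsallis tsallisGrad dd
  by_cases h0 : α = 0
  · simp only [h0, if_true, if_pos]
    rw [← Finset.sum_neg_distrib, ← Finset.sum_add_distrib, ← Finset.sum_add_distrib]
    congr 1; funext k; ring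
  · by_cases h1 : α = 1
    · simp only [h1, show ((1:ℝ) = 0) = False by simp, show ((1:ℝ) = 1) = True by simp,
        if_true, if_false]
      rw [neg_neg, ← Finset.sum_neg_distrib, ← Finset.sum_add_distrib, ← Finset.sum_add_distrib]
      congr 1; funext k; ring
    · simp only [h0, h1, if_false]
      rw [neg_add_eq_sub, div_sub_div_same, ← Finset.sum_sub_distrib, Finset.sum_div,
        ← Finset.sum_add_distrib]
      congr 1; funext k; ring


open Finset Real intervalIntegral

section rep
variable {α x y : ℝ}

lemma base_pos (hx : 0 < x) (hy : 0 < y) {s : ℝ} (hs : s ∈ Set.uIcc (0:ℝ) 1) :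
    0 < y + s * (x - y) := by
  rw [Set.uIcc_of_le zero_le_one] at hs
  rcases eq_or_lt_of_le hs.1 with h | h
  · simpa [← h] using hy
  · nlinarith [hs.2, mul_pos h hx]

lemma integrand_cont (hx : 0 < x) (hy : 0 < y) (c : ℝ) :
    IntervalIntegrable (fun s => (x - y)^2 * (1 - s) * (y + s * (x - y)) ^ c)
      MeasureTheory.volume 0 1 := by
  apply ContinuousOn.intervalIntegrable
  apply ContinuousOn.mul
  · fun_prop
  · apply ContinuousOn.rpow_const
    · fun_prop
    · intro s hs
      exact Or.inl (base_pos hx hy hs).ne'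

lemma hasDeriv_base (s : ℝ) : HasDerivAt (fun s : ℝ => y + s * (x - y)) (x - y) s := by
  simpa using ((hasDerivAt_id s).mul_const (x - y)).const_add y

lemma dd_eq_integral (α : ℝ) (hx : 0 < x) (hy : 0 < y) :
    dd α x y = ∫ s in (0:ℝ)..1, (x - y)^2 * (1 - s) * (y + s * (x - y)) ^ (α - 2) := by
  have hne : ∀ s ∈ Set.uIcc (0:ℝ) 1, y + s * (x - y) ≠ 0 :=
    fun s hs => (base_pos hx hy hs).ne'
  by_cases h0 : α = 0
  · subst h0
    have hder : ∀ s ∈ Set.uIcc (0:ℝ) 1,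
        HasDerivAt (fun s : ℝ => -x * (y + s * (x - y))⁻¹ - Real.log (y + s * (x - y)))
          ((x - y)^2 * (1 - s) * (y + s * (x - y)) ^ ((0:ℝ) - 2)) s := by
      intro s hs
      have hb := hasDeriv_base (x := x) (y := y) s
      have h1 : HasDerivAt (fun s : ℝ => -x * (y + s * (x - y))⁻¹)
          (-x * (-((y + s * (x - y))^2)⁻¹ * (x - y))) s :=
        (((hasDerivAt_inv (hne s hs)).comp s hb)).const_mul (-x)
      have h2 : HasDerivAt (fun s : ℝ => Real.log (y + s * (x - y)))
          ((y + s * (x - y))⁻¹ * (x - y)) s := by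
        simpa [Function.comp_def] using (Real.hasDerivAt_log (hne s hs)).comp s hb
      refine (h1.sub h2).congr_deriv ?_
      have hpos := base_pos hx hy hs
      have hu : y + s * (x - y) ≠ 0 := hpos.ne'
      have h2inv : (y + s * (x - y))⁻¹ = (y + s * (x - y)) * ((y + s * (x - y))^2)⁻¹ := by
        rw [sq, mul_inv]
        field_simp
      rw [show (0:ℝ) - 2 = -2 by norm_num, Real.rpow_neg hpos.le,
        show ((2:ℝ)) = ((2:ℕ):ℝ) by norm_num, Real.rpow_natCast, h2inv]
      ring
    rw [integral_eq_sub_of_hasDerivAt hder (integrand_cont hx hy _)]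
    rw [show y + 1 * (x - y) = x by ring, show y + 0 * (x - y) = y by ring]
    unfold dd
    rw [if_pos rfl]
    field_simp
    ring
  · by_cases h1 : α = 1
    · subst h1
      have hder : ∀ s ∈ Set.uIcc (0:ℝ) 1,
          HasDerivAt (fun s : ℝ => x * Real.log (y + s * (x - y)) - s * (x - y))
            ((x - y)^2 * (1 - s) * (y + s * (x - y)) ^ ((1:ℝ) - 2)) s := by
        intro s hs
        have hb := hasDeriv_base (x := x) (y := y) s
        have hl : HasDerivAt (fun s : ℝ => x * Real.log (y + s * (x - y)))
            (x * ((y + s * (x - y))⁻¹ * (x - y))) s := by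
          simpa [Function.comp_def] using ((Real.hasDerivAt_log (hne s hs)).comp s hb).const_mul x
        have hs2 : HasDerivAt (fun s : ℝ => s * (x - y)) (x - y) s := by
          simpa using (hasDerivAt_id s).mul_const (x - y)
        refine (hl.sub hs2).congr_deriv ?_
        have hu : y + s * (x - y) ≠ 0 := (base_pos hx hy hs).ne'
        rw [show (1:ℝ) - 2 = (-1 : ℤ) by norm_num, Real.rpow_intCast]
        field_simp [hu]
        ring
      rw [integral_eq_sub_of_hasDerivAt hder (integrand_cont hx hy _)]
      rw [show y + 1 * (x - y) = x by ring, show y + 0 * (x - y) = y by ring]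
      unfold dd
      rw [if_neg one_ne_zero, if_pos rfl]
      ring
    · have hder : ∀ s ∈ Set.uIcc (0:ℝ) 1,
          HasDerivAt
            (fun s : ℝ => x * (y + s * (x - y)) ^ (α - 1) / (α - 1) - (y + s * (x - y)) ^ α / α)
            ((x - y)^2 * (1 - s) * (y + s * (x - y)) ^ (α - 2)) s := by
        intro s hs
        have hb := hasDeriv_base (x := x) (y := y) s
        have hpos := base_pos hx hy hs
        have hr1 : HasDerivAt (fun s : ℝ => x * (y + s * (x - y)) ^ (α - 1) / (α - 1))
            (x * ((α - 1) * (y + s * (x - y)) ^ (α - 1 - 1) * (x - y)) / (α - 1)) s :=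
          (((Real.hasDerivAt_rpow_const (p := α - 1) (Or.inl (hne s hs))).comp s hb).const_mul
            x).div_const (α - 1)
        have hr2 : HasDerivAt (fun s : ℝ => (y + s * (x - y)) ^ α / α)
            (α * (y + s * (x - y)) ^ (α - 1) * (x - y) / α) s := by
          simpa [Function.comp_def] using (((Real.hasDerivAt_rpow_const (p := α) (Or.inl (hne s hs))).comp s hb)).div_const α
        refine (hr1.sub hr2).congr_deriv ?_
        have ha1 : α - 1 ≠ 0 := sub_ne_zero.mpr h1
        rw [show x * ((α - 1) * (y + s * (x - y)) ^ (α - 1 - 1) * (x - y)) / (α - 1)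
            = x * (y + s * (x - y)) ^ (α - 1 - 1) * (x - y) by field_simp [ha1],
          show α * (y + s * (x - y)) ^ (α - 1) * (x - y) / α
            = (y + s * (x - y)) ^ (α - 1) * (x - y) by field_simp [h0],
          show α - 1 - 1 = α - 2 by ring,
          show α - 1 = (α - 2) + 1 by ring, Real.rpow_add hpos, Real.rpow_one]
        ring
      rw [integral_eq_sub_of_hasDerivAt hder (integrand_cont hx hy _)]
      rw [show y + 1 * (x - y) = x by ring, show y + 0 * (x - y) = y by ring]
      unfold dd
      rw [if_neg h0, if_neg h1]
      have hxx : x * x ^ (α - 1) = x ^ α := by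
        nth_rewrite 1 [← Real.rpow_one x]
        rw [← Real.rpow_add hx]; norm_num
      rw [hxx]
      have ha1 : α - 1 ≠ 0 := sub_ne_zero.mpr h1
      have ha2 : (1:ℝ) - α ≠ 0 := fun h => h1 (by linarith [sub_eq_zero.mp h])
      have hyy : y ^ (α - 1) * y = y ^ α := by
        nth_rewrite 2 [← Real.rpow_one y]
        rw [← Real.rpow_add hy]; norm_num
      have key : y ^ (α - 1) / (α - 1) * (x - y) = (y ^ (α - 1) * x - y ^ α) / (α - 1) := by
        rw [← hyy]; ring
      rw [key]
      field_simp
      ring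

end rep
section ineqs
variable {α : ℝ}

lemma rpow_sum_le {β : ℝ} (hβ : 1 ≤ β) {m m' : ℝ} (hm : 0 < m) (hm' : 0 < m') :
    m ^ β + m' ^ β ≤ (m + m') ^ β := by
  have e : ∀ z : ℝ, 0 < z → z ^ β = z ^ (β - 1) * z := by
    intro z hz
    nth_rewrite 3 [← Real.rpow_one z]
    rw [← Real.rpow_add hz]; norm_num
  rw [e m hm, e m' hm', e (m + m') (by linarith)]
  have h1 : m ^ (β - 1) ≤ (m + m') ^ (β - 1) :=
    Real.rpow_le_rpow hm.le (by linarith) (by linarith)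
  have h2 : m' ^ (β - 1) ≤ (m + m') ^ (β - 1) :=
    Real.rpow_le_rpow hm'.le (by linarith) (by linarith)
  have p1 := Real.rpow_pos_of_pos hm (β - 1)
  have p2 := Real.rpow_pos_of_pos hm' (β - 1)
  nlinarith

lemma pointwise_key (hα : α ≤ 1) {m m' : ℝ} (hm : 0 < m) (hm' : 0 < m') (Δ Δ' : ℝ) :
    (Δ + Δ') ^ 2 * (m + m') ^ (α - 2) ≤ Δ ^ 2 * m ^ (α - 2) + Δ' ^ 2 * m' ^ (α - 2) := by
  have hmm : 0 < m + m' := by linarith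
  have eneg : ∀ z : ℝ, 0 < z → z ^ (α - 2) = (z ^ (2 - α))⁻¹ := by
    intro z hz
    rw [show α - 2 = -(2 - α) by ring, Real.rpow_neg hz.le]
  rw [eneg m hm, eneg m' hm', eneg _ hmm]
  set P := m ^ (2 - α) with hP_def
  set P' := m' ^ (2 - α) with hP'_def
  set Q := (m + m') ^ (2 - α) with hQ_def
  have hP : 0 < P := Real.rpow_pos_of_pos hm _
  have hP' : 0 < P' := Real.rpow_pos_of_pos hm' _
  have hQ : 0 < Q := Real.rpow_pos_of_pos hmm _
  have hPQ : P + P' ≤ Q := rpow_sum_le (by linarith) hm hm'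
  have habs : (Δ + Δ') ^ 2 ≤ (|Δ| + |Δ'|) ^ 2 := by
    rw [← sq_abs]
    exact pow_le_pow_left₀ (abs_nonneg _) (abs_add_le Δ Δ') 2
  have key : (|Δ| + |Δ'|) ^ 2 * (P * P') ≤ (Δ ^ 2 * P' + Δ' ^ 2 * P) * (P + P') := by
    have e3 : (Δ ^ 2 * P' + Δ' ^ 2 * P) * (P + P') - (|Δ| + |Δ'|) ^ 2 * (P * P')
        = (|Δ| * P' - |Δ'| * P) ^ 2 := by
      rw [← sq_abs Δ, ← sq_abs Δ']; ring
    linarith [sq_nonneg (|Δ| * P' - |Δ'| * P), e3]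
  have e2 : Δ ^ 2 * P⁻¹ + Δ' ^ 2 * P'⁻¹ = (Δ ^ 2 * P' + Δ' ^ 2 * P) * (P * P')⁻¹ := by
    field_simp
  rw [e2, ← div_eq_mul_inv, ← div_eq_mul_inv, div_le_div_iff₀ hQ (mul_pos hP hP')]
  have h3 : (Δ ^ 2 * P' + Δ' ^ 2 * P) * (P + P') ≤ (Δ ^ 2 * P' + Δ' ^ 2 * P) * Q :=
    mul_le_mul_of_nonneg_left hPQ (by positivity)
  nlinarith [mul_le_mul_of_nonneg_right habs (mul_pos hP hP').le, key, h3]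

end ineqs
section subadd
variable {α : ℝ}

lemma dd_add_le (hα : α ≤ 1) {x y u v : ℝ} (hx : 0 < x) (hy : 0 < y) (hu : 0 < u)
    (hv : 0 < v) : dd α (x + u) (y + v) ≤ dd α x y + dd α u v := by
  rw [dd_eq_integral α (add_pos hx hu) (add_pos hy hv), dd_eq_integral α hx hy,
    dd_eq_integral α hu hv, ← intervalIntegral.integral_add (integrand_cont hx hy _)
      (integrand_cont hu hv _)]
  apply intervalIntegral.integral_mono_on zero_le_one
    (integrand_cont (add_pos hx hu) (add_pos hy hv) _)
    ((integrand_cont hx hy _).add (integrand_cont hu hv _))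
  intro s hs
  have hs' : s ∈ Set.uIcc (0:ℝ) 1 := by rwa [Set.uIcc_of_le zero_le_one]
  have hm : 0 < y + s * (x - y) := base_pos hx hy hs'
  have hm' : 0 < v + s * (u - v) := base_pos hu hv hs'
  have h1s : 0 ≤ 1 - s := by linarith [hs.2]
  rw [show y + v + s * (x + u - (y + v)) = (y + s * (x - y)) + (v + s * (u - v)) by ring]
  have key := pointwise_key hα hm hm' (x - y) (u - v)
  have key2 := mul_le_mul_of_nonneg_left key h1s
  rw [show x + u - (y + v) = (x - y) + (u - v) by ring]
  nlinarith [key2]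

lemma dd_sum_le (hα : α ≤ 1) {K : ℕ} (S : Finset (Fin K)) (hS : S.Nonempty)
    (p q : Fin K → ℝ) (hp : ∀ k ∈ S, 0 < p k) (hq : ∀ k ∈ S, 0 < q k) :
    dd α (∑ k ∈ S, p k) (∑ k ∈ S, q k) ≤ ∑ k ∈ S, dd α (p k) (q k) := by
  induction hS using Finset.Nonempty.cons_induction with
  | singleton a => simp
  | cons a s ha hs ih =>
    rw [Finset.sum_cons, Finset.sum_cons, Finset.sum_cons]
    have hp' : ∀ k ∈ s, 0 < p k := fun k hk => hp k (Finset.mem_cons_of_mem hk)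
    have hq' : ∀ k ∈ s, 0 < q k := fun k hk => hq k (Finset.mem_cons_of_mem hk)
    calc dd α (p a + ∑ k ∈ s, p k) (q a + ∑ k ∈ s, q k)
        ≤ dd α (p a) (q a) + dd α (∑ k ∈ s, p k) (∑ k ∈ s, q k) :=
          dd_add_le hα (hp a (Finset.mem_cons_self a s)) (hq a (Finset.mem_cons_self a s))
            (Finset.sum_pos hp' hs) (Finset.sum_pos hq' hs)
      _ ≤ dd α (p a) (q a) + ∑ k ∈ s, dd α (p k) (q k) := by
          linarith [ih hp' hq']

lemma half_pow (hα : α ≤ 1) {u : ℝ} (hu : 0 < u) (hu1 : u < 1) :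
    (2:ℝ) ^ ((3:ℝ) - α) ≤ u ^ (α - 2) + (1 - u) ^ (α - 2) := by
  have h1u : 0 < 1 - u := by linarith
  set r := (α - 2) / 2 with hr
  have e1 : ∀ z : ℝ, 0 < z → z ^ (α - 2) = z ^ r * z ^ r := by
    intro z hz
    rw [← Real.rpow_add hz, hr]; ring_nf
  rw [e1 u hu, e1 _ h1u]
  have hab : (u * (1 - u)) ^ r = u ^ r * (1 - u) ^ r := Real.mul_rpow hu.le h1u.le
  have hle : (1/4 : ℝ) ^ r ≤ (u * (1 - u)) ^ r := by
    apply Real.rpow_le_rpow_of_nonpos (by positivity) (by nlinarith [sq_nonneg (u - 1/2)]) (by rw [hr]; linarith)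
  have h14 : (1/4 : ℝ) ^ r = (2:ℝ) ^ ((2:ℝ) - α) := by
    rw [show (1/4 : ℝ) = (2:ℝ) ^ (-2 : ℝ) by
        rw [show (-2 : ℝ) = ((-2 : ℤ) : ℝ) by norm_num, Real.rpow_intCast]; norm_num,
      ← Real.rpow_mul (by norm_num : (0:ℝ) ≤ 2)]
    congr 1
    rw [hr]; ring
  have h32 : (2:ℝ) ^ ((3:ℝ) - α) = 2 * (2:ℝ) ^ ((2:ℝ) - α) := by
    rw [show (3:ℝ) - α = 1 + (2 - α) by ring, Real.rpow_add (by norm_num), Real.rpow_one]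
  have hprod : (2:ℝ) ^ ((2:ℝ) - α) ≤ u ^ r * (1 - u) ^ r := by
    rw [← hab, ← h14]; exact hle
  nlinarith [sq_nonneg (u ^ r - (1 - u) ^ r), hprod]

lemma integral_one_sub_s : (∫ s in (0:ℝ)..1, (1 - s)) = 1/2 := by
  rw [intervalIntegral.integral_sub intervalIntegrable_const intervalIntegrable_id,
    intervalIntegral.integral_const, integral_id]
  norm_num

lemma const_integral (C : ℝ) : (∫ s in (0:ℝ)..1, C * (1 - s)) = C / 2 := by
  rw [intervalIntegral.integral_const_mul, integral_one_sub_s]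
  ring

lemma dd_two (hα : α ≤ 1) {a b : ℝ} (ha : 0 < a) (ha1 : a < 1) (hb : 0 < b) (hb1 : b < 1) :
    (2:ℝ) ^ ((2:ℝ) - α) * (a - b) ^ 2 ≤ dd α a b + dd α (1 - a) (1 - b) := by
  have h1a : 0 < 1 - a := by linarith
  have h1b : 0 < 1 - b := by linarith
  have key : (2:ℝ) ^ ((2:ℝ) - α) * (a - b) ^ 2
      = ∫ s in (0:ℝ)..1, ((a - b) ^ 2 * ((2:ℝ) ^ ((3:ℝ) - α))) * (1 - s) := by
    rw [const_integral, show (3:ℝ) - α = 1 + (2 - α) by ring,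
      Real.rpow_add (by norm_num : (0:ℝ) < 2), Real.rpow_one]
    ring
  rw [key, dd_eq_integral α ha hb, dd_eq_integral α h1a h1b,
    ← intervalIntegral.integral_add (integrand_cont ha hb _) (integrand_cont h1a h1b _)]
  apply intervalIntegral.integral_mono_on zero_le_one
  · apply ContinuousOn.intervalIntegrable
    fun_prop
  · exact (integrand_cont ha hb _).add (integrand_cont h1a h1b _)
  intro s hs
  have hs' : s ∈ Set.uIcc (0:ℝ) 1 := by rwa [Set.uIcc_of_le zero_le_one]
  have hm : 0 < b + s * (a - b) := base_pos ha hb hs'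
  have hm1 : 0 < 1 - (b + s * (a - b)) := by
    have := base_pos h1a h1b hs'
    nlinarith [this]
  rw [show 1 - b + s * (1 - a - (1 - b)) = 1 - (b + s * (a - b)) by ring]
  have hkey := half_pow hα hm (by linarith)
  have h1s : 0 ≤ 1 - s := by linarith [hs.2]
  have hC : 0 ≤ (a - b) ^ 2 * (1 - s) := by positivity
  nlinarith [mul_le_mul_of_nonneg_left hkey hC]

lemma dd_upper_plus (hα : α ≤ 1) {c t : ℝ} (hc : 0 < c) (ht : 0 ≤ t) :
    dd α (c + t) c ≤ t ^ 2 / 2 * c ^ (α - 2) := by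
  rw [dd_eq_integral α (by linarith) hc,
    show t ^ 2 / 2 * c ^ (α - 2) = (t ^ 2 * c ^ (α - 2)) / 2 by ring,
    ← const_integral]
  apply intervalIntegral.integral_mono_on zero_le_one (integrand_cont (by linarith) hc _)
  · apply ContinuousOn.intervalIntegrable; fun_prop
  intro s hs
  rw [show c + t - c = t by ring]
  have hbase : c ≤ c + s * t := by nlinarith [hs.1, hs.2]
  have hr := Real.rpow_le_rpow_of_nonpos hc hbase (by linarith : α - 2 ≤ 0)
  have h1s : 0 ≤ 1 - s := by linarith [hs.2]
  nlinarith [mul_le_mul_of_nonneg_left hr (mul_nonneg (sq_nonneg t) h1s)]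

lemma dd_upper_minus (hα : α ≤ 1) {c t : ℝ} (ht : 0 ≤ t) (htc : t < c) :
    dd α (c - t) c ≤ t ^ 2 / 2 * (c - t) ^ (α - 2) := by
  have hct : 0 < c - t := by linarith
  have hc : 0 < c := by linarith
  rw [dd_eq_integral α hct hc,
    show t ^ 2 / 2 * (c - t) ^ (α - 2) = (t ^ 2 * (c - t) ^ (α - 2)) / 2 by ring,
    ← const_integral]
  apply intervalIntegral.integral_mono_on zero_le_one (integrand_cont hct hc _)
  · apply ContinuousOn.intervalIntegrable; fun_prop
  intro s hs
  have hbase : c - t ≤ c + s * (c - t - c) := by nlinarith [hs.1, hs.2]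
  have hr := Real.rpow_le_rpow_of_nonpos hct hbase (by linarith : α - 2 ≤ 0)
  have h1s : 0 ≤ 1 - s := by linarith [hs.2]
  nlinarith [mul_le_mul_of_nonneg_left hr (mul_nonneg (sq_nonneg (c - t - c)) h1s)]

end subadd
section lower
variable {α : ℝ}

lemma dd_self (α x : ℝ) : dd α x x = 0 := by
  unfold dd; split_ifs <;> ring

lemma two_rpow_pos (t : ℝ) : 0 < (2:ℝ) ^ t := Real.rpow_pos_of_pos two_pos t

lemma main_lower {K : ℕ} (hK : 0 < K) (hα : α ≤ 1) {p q : Fin K → ℝ}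
    (hp : p ∈ relintSimplex K) (hq : q ∈ relintSimplex K) :
    (2:ℝ) ^ (-α) * (l1 (p - q)) ^ 2 ≤ breg α p q := by
  obtain ⟨hp1, hp2⟩ := hp
  obtain ⟨hq1, hq2⟩ := hq
  by_cases hpq : p = q
  · subst hpq
    simp [l1, breg_eq_sum, dd_self]
  have huniv : (Finset.univ : Finset (Fin K)).Nonempty := ⟨⟨0, hK⟩, Finset.mem_univ _⟩
  set A : Finset (Fin K) := Finset.univ.filter (fun k => q k ≤ p k) with hA_def
  set B : Finset (Fin K) := Finset.univ.filter (fun k => ¬ q k ≤ p k) with hB_def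
  have hsplit : ∀ f : Fin K → ℝ, ∑ k ∈ A, f k + ∑ k ∈ B, f k = ∑ k, f k :=
    fun f => Finset.sum_filter_add_sum_filter_not _ _ f
  have hAne : A.Nonempty := by
    by_contra h
    rw [Finset.not_nonempty_iff_eq_empty] at h
    have hall : ∀ k ∈ Finset.univ, p k < q k := by
      intro k _
      by_contra h'
      push_neg at h'
      have hmem : k ∈ A := Finset.mem_filter.mpr ⟨Finset.mem_univ k, h'⟩
      rw [h] at hmem
      exact Finset.notMem_empty k hmem
    have := Finset.sum_lt_sum_of_nonempty huniv hall
    rw [hp2, hq2] at this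
    exact lt_irrefl 1 this
  have hBne : B.Nonempty := by
    by_contra h
    rw [Finset.not_nonempty_iff_eq_empty] at h
    have hall : ∀ k ∈ Finset.univ, q k ≤ p k := by
      intro k _
      by_contra h'
      push_neg at h'
      have : k ∈ B := Finset.mem_filter.mpr ⟨Finset.mem_univ k, not_le.mpr h'⟩
      rw [h] at this
      exact Finset.notMem_empty k this
    obtain ⟨j, hj⟩ := Function.ne_iff.mp hpq
    have hj' : q j < p j := lt_of_le_of_ne (hall j (Finset.mem_univ j)) (fun h' => hj h'.symm)
    have := Finset.sum_lt_sum hall ⟨j, Finset.mem_univ j, hj'⟩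
    rw [hp2, hq2] at this
    exact lt_irrefl 1 this
  set a := ∑ k ∈ A, p k with ha_def
  set b := ∑ k ∈ A, q k with hb_def
  have hsp := hsplit p
  have hsq := hsplit q
  rw [hp2] at hsp
  rw [hq2] at hsq
  have ha0 : 0 < a := Finset.sum_pos (fun k _ => (hp1 k).1) hAne
  have hb0 : 0 < b := Finset.sum_pos (fun k _ => (hq1 k).1) hAne
  have hBp : 0 < ∑ k ∈ B, p k := Finset.sum_pos (fun k _ => (hp1 k).1) hBne
  have hBq : 0 < ∑ k ∈ B, q k := Finset.sum_pos (fun k _ => (hq1 k).1) hBne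
  have ha1 : a < 1 := by linarith
  have hb1 : b < 1 := by linarith
  have hl1 : l1 (p - q) = 2 * (a - b) := by
    unfold l1
    rw [← hsplit (fun k => |(p - q) k|)]
    have e1 : ∑ k ∈ A, |(p - q) k| = ∑ k ∈ A, (p k - q k) := by
      apply Finset.sum_congr rfl
      intro k hk
      have hk' : q k ≤ p k := (Finset.mem_filter.mp hk).2
      rw [Pi.sub_apply, abs_of_nonneg (by linarith)]
    have e2 : ∑ k ∈ B, |(p - q) k| = ∑ k ∈ B, (q k - p k) := by
      apply Finset.sum_congr rfl
      intro k hk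
      have hk' : ¬ q k ≤ p k := (Finset.mem_filter.mp hk).2
      rw [Pi.sub_apply, abs_of_neg (by push_neg at hk'; linarith)]
      ring
    rw [e1, e2, Finset.sum_sub_distrib, Finset.sum_sub_distrib]
    linarith
  have hDD : dd α a b + dd α (1 - a) (1 - b) ≤ breg α p q := by
    rw [breg_eq_sum, ← hsplit (fun k => dd α (p k) (q k))]
    have s1 := dd_sum_le (α := α) hα A hAne p q (fun k _ => (hp1 k).1) (fun k _ => (hq1 k).1)
    have s2 := dd_sum_le (α := α) hα B hBne p q (fun k _ => (hp1 k).1) (fun k _ => (hq1 k).1)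
    have e3 : ∑ k ∈ B, p k = 1 - a := by linarith
    have e4 : ∑ k ∈ B, q k = 1 - b := by linarith
    rw [e3, e4] at s2
    exact add_le_add s1 s2
  have htwo := dd_two hα ha0 ha1 hb0 hb1
  have hconst : (2:ℝ) ^ ((2:ℝ) - α) = 4 * (2:ℝ) ^ (-α) := by
    rw [show (2:ℝ) - α = 2 + (-α) by ring, Real.rpow_add (by norm_num)]
    norm_num
  rw [hl1]
  nlinarith [htwo, hDD, hconst]

end lower
section construction
variable {α : ℝ}

lemma sum_two {K : ℕ} {i0 i1 : Fin K} (h : i0 ≠ i1) (A B C : ℝ) :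
    ∑ k, (if k = i0 then A else if k = i1 then B else C) = A + B + ((K : ℝ) - 2) * C := by
  set f : Fin K → ℝ := fun k => if k = i0 then A else if k = i1 then B else C with hf
  have h1 : i1 ∈ Finset.univ.erase i0 := Finset.mem_erase.mpr ⟨h.symm, Finset.mem_univ _⟩
  rw [← Finset.add_sum_erase _ f (Finset.mem_univ i0), ← Finset.add_sum_erase _ f h1]
  have e1 : ∀ k ∈ (Finset.univ.erase i0).erase i1, f k = C := by
    intro k hk
    obtain ⟨hk1, hk0, _⟩ := Finset.mem_erase.mp hk |>.imp id (fun h' => Finset.mem_erase.mp h')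
    simp only [hf, if_neg hk0, if_neg hk1]
  rw [Finset.sum_congr rfl e1, Finset.sum_const, Finset.card_erase_of_mem h1,
    Finset.card_erase_of_mem (Finset.mem_univ i0), Finset.card_univ, Fintype.card_fin]
  have hK2 : 2 ≤ K := by
    rcases Nat.lt_or_ge K 2 with hKlt | hKge
    · interval_cases K
      · exact absurd i0.2 (by omega)
      · exact absurd (Fin.ext_iff.not.mp h) (by omega)
    · exact hKge
  have e0 : f i0 = A := by simp [hf]
  have e2 : f i1 = B := by simp [hf, h.symm]
  rw [e0, e2, nsmul_eq_mul]
  have : ((K - 1 - 1 : ℕ) : ℝ) = (K : ℝ) - 2 := by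
    have : (K : ℝ) = ((K : ℕ) : ℝ) := rfl
    push_cast [Nat.cast_sub (by omega : 1 ≤ K - 1), Nat.cast_sub (by omega : 1 ≤ K)]
    ring
  rw [this]
  ring

lemma construction {K : ℕ} (hK : 2 ≤ K) (hα : α ≤ 1) {u : ℝ} (hu : 0 < u)
    (hu2 : u < 1 / (2 * K)) :
    ∃ p ∈ relintSimplex K, ∃ q ∈ relintSimplex K, p ≠ q ∧ l1 (p - q) = 2 * u ∧
      breg α p q ≤ u ^ 2 / 2 *
        (((1 - ((K:ℝ) - 2) * u) / 2) ^ (α - 2) + ((1 - ((K:ℝ) - 2) * u) / 2 - u) ^ (α - 2)) := by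
  have hKR : (2:ℝ) ≤ (K:ℝ) := by exact_mod_cast hK
  have hKpos : (0:ℝ) < 2 * K := by positivity
  have hKu : (K:ℝ) * u < 1 / 2 := by
    rw [lt_div_iff₀ hKpos] at hu2
    nlinarith
  set c : ℝ := (1 - ((K:ℝ) - 2) * u) / 2 with hc_def
  have hc4 : 1 / 4 < c := by nlinarith
  have hc12 : c ≤ 1 / 2 := by nlinarith
  have hu4 : u < 1 / 4 := by
    have : 1 / (2 * (K:ℝ)) ≤ 1 / 4 := by
      apply div_le_div_of_nonneg_left (by norm_num) (by norm_num)
      linarith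
    linarith
  have huc : u < c := by linarith
  have hcpos : 0 < c := by linarith
  have hcu1 : c + u < 1 := by linarith
  set i0 : Fin K := ⟨0, by omega⟩ with hi0
  set i1 : Fin K := ⟨1, by omega⟩ with hi1
  have hne : i0 ≠ i1 := by
    simp only [hi0, hi1, Fin.mk.injEq, ne_eq]
    omega
  set p : Fin K → ℝ := fun k => if k = i0 then c + u else if k = i1 then c - u else u with hp_def
  set q : Fin K → ℝ := fun k => if k = i0 then c else if k = i1 then c else u with hq_def
  have hpmem : p ∈ relintSimplex K := by
    constructor
    · intro k
      simp only [hp_def]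
      split_ifs <;> constructor <;> linarith
    · rw [show (∑ k, p k) = ∑ k, (if k = i0 then c + u else if k = i1 then c - u else u) from rfl,
        sum_two hne]
      ring
  have hqmem : q ∈ relintSimplex K := by
    constructor
    · intro k
      simp only [hq_def]
      split_ifs <;> constructor <;> linarith
    · rw [show (∑ k, q k) = ∑ k, (if k = i0 then c else if k = i1 then c else u) from rfl,
        sum_two hne]
      ring
  have hpq : p ≠ q := by
    intro h
    have := congrFun h i0
    simp only [hp_def, hq_def, if_pos rfl] at this
    linarith
  refine ⟨p, hpmem, q, hqmem, hpq, ?_, ?_⟩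
  · unfold l1
    have e : ∀ k : Fin K, |(p - q) k| = (if k = i0 then u else if k = i1 then u else 0) := by
      intro k
      simp only [Pi.sub_apply, hp_def, hq_def]
      split_ifs with h1 h2
      · rw [show c + u - c = u by ring, abs_of_pos hu]
      · rw [show c - u - c = -u by ring, abs_neg, abs_of_pos hu]
      · simp
    rw [Finset.sum_congr rfl (fun k _ => e k), sum_two hne]
    ring
  · rw [breg_eq_sum]
    have e : ∀ k : Fin K, dd α (p k) (q k)
        = (if k = i0 then dd α (c + u) c else if k = i1 then dd α (c - u) c else 0) := by
      intro k
      simp only [hp_def, hq_def]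
      split_ifs with h1 h2
      · rfl
      · rfl
      · exact dd_self α u
    rw [Finset.sum_congr rfl (fun k _ => e k), sum_two hne]
    have b1 := dd_upper_plus hα hcpos hu.le
    have b2 := dd_upper_minus hα hu.le huc
    have := add_le_add b1 b2
    rw [hc_def] at this ⊢
    linarith

end construction
theorem pinsker_tsallis_alpha_le_one (K : ℕ) (hK : 2 ≤ K) (α : ℝ) (hα : α ≤ 1) :
    sInf {r : ℝ | ∃ p ∈ relintSimplex K, ∃ q ∈ relintSimplex K,
        p ≠ q ∧ r = 2 * breg α p q / (l1 (p - q)) ^ 2} = (2 : ℝ) ^ (1 - α) ∧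
    (∀ p ∈ relintSimplex K, ∀ q ∈ relintSimplex K,
        breg α p q ≥ (2 : ℝ) ^ (-α) * (l1 (p - q)) ^ 2) ∧
    IsGreatest {C : ℝ | 0 ≤ C ∧ ∀ p ∈ relintSimplex K, ∀ q ∈ relintSimplex K,
        breg α p q ≥ C / 2 * (l1 (p - q)) ^ 2} ((2 : ℝ) ^ (1 - α)) := by
  have hK0 : 0 < K := by omega
  set L : ℝ := (2:ℝ) ^ (1 - α) with hL
  set S : Set ℝ := {r : ℝ | ∃ p ∈ relintSimplex K, ∃ q ∈ relintSimplex K,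
      p ≠ q ∧ r = 2 * breg α p q / (l1 (p - q)) ^ 2} with hS
  have hL2 : L = 2 * (2:ℝ) ^ (-α) := by
    rw [hL, show (1:ℝ) - α = 1 + (-α) by ring, Real.rpow_add two_pos, Real.rpow_one]
  have lower : ∀ p ∈ relintSimplex K, ∀ q ∈ relintSimplex K,
      (2:ℝ) ^ (-α) * (l1 (p - q)) ^ 2 ≤ breg α p q :=
    fun p hp q hq => main_lower hK0 hα hp hq
  have l1pos : ∀ p q : Fin K → ℝ, p ≠ q → 0 < l1 (p - q) := by
    intro p q hpq
    obtain ⟨j, hj⟩ := Function.ne_iff.mp hpq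
    unfold l1
    apply Finset.sum_pos' (fun k _ => abs_nonneg _)
    exact ⟨j, Finset.mem_univ j, abs_pos.mpr (by simpa [Pi.sub_apply] using sub_ne_zero.mpr hj)⟩
  have hlb : ∀ r ∈ S, L ≤ r := by
    rintro r ⟨p, hp, q, hq, hpq, rfl⟩
    have hL1 := l1pos p q hpq
    have hlow := lower p hp q hq
    rw [le_div_iff₀ (by positivity)]
    nlinarith [hlow, sq_nonneg (l1 (p - q))]
  set φ : ℝ → ℝ := fun u => (((1 - ((K:ℝ) - 2) * u) / 2) ^ (α - 2)
      + ((1 - ((K:ℝ) - 2) * u) / 2 - u) ^ (α - 2)) / 4 with hφ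
  have half : ((1:ℝ)/2) ^ (α - 2) = (2:ℝ) ^ ((2:ℝ) - α) := by
    rw [show ((1:ℝ)/2) = (2:ℝ) ^ (-1 : ℝ) by rw [Real.rpow_neg_one]; norm_num,
      ← Real.rpow_mul (by norm_num : (0:ℝ) ≤ 2)]
    congr 1; ring
  have hφ0 : φ 0 = L := by
    simp only [hφ]
    rw [show (1 - ((K:ℝ) - 2) * 0) / 2 - 0 = 1/2 by ring, show (1 - ((K:ℝ) - 2) * 0) / 2 = 1/2 by ring,
      half, hL, show (2:ℝ) - α = 1 + (1 - α) by ring, Real.rpow_add two_pos, Real.rpow_one]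
    ring
  have hcont : ContinuousAt φ 0 := by
    have hc : ContinuousAt (fun u : ℝ => (1 - ((K:ℝ) - 2) * u) / 2) 0 := by fun_prop
    have hc2 : ContinuousAt (fun u : ℝ => (1 - ((K:ℝ) - 2) * u) / 2 - u) 0 := by fun_prop
    have h1 : ContinuousAt (fun u : ℝ => ((1 - ((K:ℝ) - 2) * u) / 2) ^ (α - 2)) 0 :=
      ContinuousAt.comp (Real.continuousAt_rpow_const _ _ (Or.inl (by norm_num))) hc
    have h2 : ContinuousAt (fun u : ℝ => ((1 - ((K:ℝ) - 2) * u) / 2 - u) ^ (α - 2)) 0 :=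
      ContinuousAt.comp (Real.continuousAt_rpow_const _ _ (Or.inl (by norm_num))) hc2
    exact (h1.add h2).div_const 4
  have htend : Filter.Tendsto φ (nhdsWithin 0 (Set.Ioi 0)) (nhds L) := by
    rw [← hφ0]
    exact hcont.tendsto.mono_left nhdsWithin_le_nhds
  have happrox : ∀ η > (0:ℝ), ∃ r ∈ S, r < L + η := by
    intro η hη
    have hev1 : ∀ᶠ u in nhdsWithin 0 (Set.Ioi 0), φ u < L + η :=
      htend.eventually (eventually_lt_nhds (by linarith))
    have hev2 : ∀ᶠ u in nhdsWithin (0:ℝ) (Set.Ioi 0), u ∈ Set.Ioo (0:ℝ) (1/(2*K)) :=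
      Ioo_mem_nhdsGT_of_mem ⟨le_refl 0, by positivity⟩
    obtain ⟨u, hu1, hu2⟩ := (hev1.and hev2).exists
    obtain ⟨p, hp, q, hq, hpq, hl1, hbr⟩ := construction hK hα hu2.1 hu2.2
    refine ⟨2 * breg α p q / (l1 (p - q)) ^ 2, ⟨p, hp, q, hq, hpq, rfl⟩, ?_⟩
    have hup : 0 < u := hu2.1
    have key : 2 * breg α p q / (l1 (p - q)) ^ 2 ≤ φ u := by
      rw [hl1, div_le_iff₀ (by positivity)]
      simp only [hφ]
      nlinarith [hbr]
    exact key.trans_lt hu1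
  have hSne : S.Nonempty := by
    obtain ⟨r, hr, _⟩ := happrox 1 one_pos
    exact ⟨r, hr⟩
  have hbdd : BddBelow S := ⟨L, hlb⟩
  have hinf : sInf S = L := by
    apply le_antisymm
    · apply le_of_forall_pos_le_add
      intro η hη
      obtain ⟨r, hrS, hrlt⟩ := happrox η hη
      exact (csInf_le hbdd hrS).trans hrlt.le
    · exact le_csInf hSne hlb
  refine ⟨hinf, fun p hp q hq => lower p hp q hq, ⟨⟨Real.rpow_nonneg (by norm_num) _, ?_⟩, ?_⟩⟩
  · intro p hp q hq
    have := lower p hp q hq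
    have e : L / 2 = (2:ℝ) ^ (-α) := by rw [hL2]; ring
    rw [ge_iff_le, show (2:ℝ) ^ (1 - α) / 2 = (2:ℝ) ^ (-α) from e]
    exact this
  · rintro C ⟨hC0, hCprop⟩
    have hClb : ∀ r ∈ S, C ≤ r := by
      rintro r ⟨p, hp, q, hq, hpq, rfl⟩
      have h1 := hCprop p hp q hq
      have h2 := l1pos p q hpq
      rw [le_div_iff₀ (by positivity)]
      nlinarith [h1]
    apply le_of_forall_pos_le_add
    intro η hη
    obtain ⟨r, hrS, hrlt⟩ := happrox η hη
    exact (hClb r hrS).trans hrlt.le
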